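/- In a game of Toggle starting from the position P_{0,1}(m,1) or from the position P_{1,0}(m,1) on the generalized Petersen graph P(m,1) (m ≥ 3), every vertex v that is unplayable at some reachable position is terminally unplayable at that position. -/

import Mathlib

namespace Toggle

variable {V : Type*} [Fintype V] [DecidableEq V]

/-- The closed neighborhood `N[v]` of a vertex as a `Finset`. -/
def closedNbhd (G : SimpleGraph V) [DecidableRel G.Adj] (v : V) : Finset V :=
  insert v (G.neighborFinset v)

/-- The result of a Toggle move at `v`: flip the weight of every vertex in `N[v]`. -/
def move (G : SimpleGraph V) [DecidableRel G.Adj] (ω : V → Bool) (v : V) : V → Bool :=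
  fun u => if u ∈ closedNbhd G v then !(ω u) else ω u

/-- Total weight of a position. -/
def weight (ω : V → Bool) : ℕ := (Finset.univ.filter (fun u => ω u = true)).card

/-- Weight of a position over the closed neighborhood of `v`. -/
def nbhdWeight (G : SimpleGraph V) [DecidableRel G.Adj] (ω : V → Bool) (v : V) : ℕ :=
  ((closedNbhd G v).filter (fun u => ω u = true)).card

/-- A Toggle move at `v` is legal iff `ω v = 1` and the move strictly decreases the
weight over `N[v]`. -/
def IsLegal (G : SimpleGraph V) [DecidableRel G.Adj] (ω : V → Bool) (v : V) : Prop :=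
  ω v = true ∧ nbhdWeight G (move G ω v) v < nbhdWeight G ω v

instance (G : SimpleGraph V) [DecidableRel G.Adj] (ω : V → Bool) (v : V) :
    Decidable (IsLegal G ω v) :=
  inferInstanceAs (Decidable (ω v = true ∧ nbhdWeight G (move G ω v) v < nbhdWeight G ω v))

theorem weight_move_lt (G : SimpleGraph V) [DecidableRel G.Adj] {ω : V → Bool} {v : V}
    (h : IsLegal G ω v) : weight (move G ω v) < weight ω := by
  have key : ∀ ψ : V → Bool,
      weight ψ = ((closedNbhd G v).filter (fun u => ψ u = true)).card
        + ((Finset.univ \ closedNbhd G v).filter (fun u => ψ u = true)).card := by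
    intro ψ
    rw [weight, ← Finset.card_union_of_disjoint
      (Finset.disjoint_filter_filter Finset.disjoint_sdiff)]
    congr 1
    ext u
    simp only [Finset.mem_filter, Finset.mem_union, Finset.mem_sdiff, Finset.mem_univ,
      true_and]
    tauto
  have hout : ((Finset.univ \ closedNbhd G v).filter (fun u => move G ω v u = true))
      = ((Finset.univ \ closedNbhd G v).filter (fun u => ω u = true)) := by
    apply Finset.filter_congr
    intro u hu
    rw [Finset.mem_sdiff] at hu
    simp [move, hu.2]
  have h2 := h.2
  rw [key (move G ω v), key ω, hout]
  unfold nbhdWeight at h2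
  omega

/-- Minimal excludant of a finite set of naturals. -/
noncomputable def mex (s : Finset ℕ) : ℕ := sInf {n : ℕ | n ∉ s}

/-- The Nimber (Grundy value) of a Toggle position. -/
noncomputable def grundy (G : SimpleGraph V) [DecidableRel G.Adj] (ω : V → Bool) : ℕ :=
  mex ((Finset.univ.filter (fun v => IsLegal G ω v)).attach.image
    (fun v => grundy G (move G ω v.1)))
termination_by weight ω
decreasing_by
  have hv := v.2
  rw [Finset.mem_filter] at hv
  exact weight_move_lt G hv.2

/-- One legal Toggle move transforms `ω` into `ω'`. -/
def Step (G : SimpleGraph V) [DecidableRel G.Adj] (ω ω' : V → Bool) : Prop :=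
  ∃ v, IsLegal G ω v ∧ ω' = move G ω v

/-- `ω'` is reachable from `ω` by a (possibly empty) sequence of legal moves. -/
def Reach (G : SimpleGraph V) [DecidableRel G.Adj] (ω ω' : V → Bool) : Prop :=
  Relation.ReflTransGen (Step G) ω ω'

/-- `v` is terminally unplayable at `ω`: unplayable at `ω` and at every position
reachable from `ω`. -/
def TerminallyUnplayable (G : SimpleGraph V) [DecidableRel G.Adj] (ω : V → Bool) (v : V) :
    Prop :=
  ∀ ω', Reach G ω ω' → ¬ IsLegal G ω' v

/-- `v` is penultimately unplayable for the initial position `ω₀`: at every position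
reachable from `ω₀`, after any legal move at a vertex `u ∈ N[v]`, the vertex `v` is
terminally unplayable. -/
def PenultimatelyUnplayableAt (G : SimpleGraph V) [DecidableRel G.Adj] (ω₀ : V → Bool)
    (v : V) : Prop :=
  ∀ ω', Reach G ω₀ ω' → ∀ u ∈ closedNbhd G v, IsLegal G ω' u →
    TerminallyUnplayable G (move G ω' u) v

/-- The position `ω₀` is penultimately unplayable if every vertex is. -/
def PenultimatelyUnplayable (G : SimpleGraph V) [DecidableRel G.Adj] (ω₀ : V → Bool) :
    Prop :=
  ∀ v, PenultimatelyUnplayableAt G ω₀ v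

/-- The path graph on `Fin n`, vertices `0, 1, …, n-1` in order. -/
def pathGraph (n : ℕ) : SimpleGraph (Fin n) :=
  SimpleGraph.fromRel (fun a b => (a : ℕ) + 1 = (b : ℕ))

instance (n : ℕ) : DecidableRel (pathGraph n).Adj := fun a b =>
  decidable_of_iff _ (SimpleGraph.fromRel_adj _ a b).symm

/-- The 2×m grid graph `L_{2,m}` (0-indexed rows and columns). -/
def gridGraph (m : ℕ) : SimpleGraph (Fin 2 × Fin m) :=
  SimpleGraph.fromRel (fun a b =>
    (a.1 = b.1 ∧ (a.2 : ℕ) + 1 = (b.2 : ℕ)) ∨ (a.2 = b.2 ∧ (a.1 : ℕ) + 1 = (b.1 : ℕ)))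

instance (m : ℕ) : DecidableRel (gridGraph m).Adj := fun a b =>
  decidable_of_iff _ (SimpleGraph.fromRel_adj _ a b).symm

/-- The generalized Petersen graph `P(m,k)`; the vertex `(0, i)` is the outer vertex
`u_i` and `(1, i)` is the inner vertex `w_i` (0-indexed). -/
def petersen (m k : ℕ) : SimpleGraph (Fin 2 × Fin m) :=
  SimpleGraph.fromRel (fun a b =>
    (a.1 = 0 ∧ b.1 = 0 ∧ ((a.2 : ℕ) + 1) % m = (b.2 : ℕ)) ∨
    (a.1 = 0 ∧ b.1 = 1 ∧ a.2 = b.2) ∨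
    (a.1 = 1 ∧ b.1 = 1 ∧ ((a.2 : ℕ) + k) % m = (b.2 : ℕ)))

instance (m k : ℕ) : DecidableRel (petersen m k).Adj := fun a b =>
  decidable_of_iff _ (SimpleGraph.fromRel_adj _ a b).symm

/-- The position on `P(m,k)` where every outer vertex has weight 1 and every inner
vertex has weight 0. -/
def P01 (m : ℕ) : Fin 2 × Fin m → Bool := fun p => decide (p.1 = 0)

/-- The position on `P(m,k)` where every inner vertex has weight 1 and every outer
vertex has weight 0. -/
def P10 (m : ℕ) : Fin 2 × Fin m → Bool := fun p => decide (p.1 = 1)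

/-- The position where every vertex has weight 1. -/
def P11 (m : ℕ) : Fin 2 × Fin m → Bool := fun _ => true

/-- The Toggle position `H_m` on `L_{2,m}` (columns 0-indexed): for `m ≠ 3`, weight 0
exactly at `(0,0), (0,m-1), (1,0), (1,1), (1,m-2), (1,m-1)`; for `m = 3`, weight 0
exactly at `(0,0), (0,2), (1,0), (1,2)`. -/
def Hpos (m : ℕ) : Fin 2 × Fin m → Bool := fun p =>
  if m = 3 then !(decide ((p.2 : ℕ) = 0 ∨ (p.2 : ℕ) = 2))
  else !(decide ((p.1 = 0 ∧ ((p.2 : ℕ) = 0 ∨ (p.2 : ℕ) = m - 1)) ∨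
                 (p.1 = 1 ∧ ((p.2 : ℕ) ≤ 1 ∨ m - 2 ≤ (p.2 : ℕ)))))

/-- The Toggle position `D_m` on `L_{2,m}` (columns 0-indexed): weight 0 exactly at
`(0,0), (0,m-2), (0,m-1), (1,0), (1,1), (1,m-1)`. -/
def Dpos (m : ℕ) : Fin 2 × Fin m → Bool := fun p =>
  !(decide ((p.1 = 0 ∧ ((p.2 : ℕ) = 0 ∨ m - 2 ≤ (p.2 : ℕ))) ∨
            (p.1 = 1 ∧ ((p.2 : ℕ) ≤ 1 ∨ (p.2 : ℕ) = m - 1))))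

/-- The Nimber of the position `H_m`. -/
noncomputable def GH (m : ℕ) : ℕ := grundy (gridGraph m) (Hpos m)

/-- The Nimber of the position `D_m`. -/
noncomputable def GD (m : ℕ) : ℕ := grundy (gridGraph m) (Dpos m)

/-- The cycle graph `C_m` on `Fin m`. -/
def cycleGraph (m : ℕ) : SimpleGraph (Fin m) :=
  SimpleGraph.fromRel (fun a b => ((a : ℕ) + 1) % m = (b : ℕ))

open scoped Classical in
/-- The Nimber of a position of Jacob's Ladder on `C_m`: a position is the `Finset` of
not-yet-removed vertices, and a move at a remaining vertex `v` removes all remaining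
vertices at distance at most 2 from `v` in `C_m`. -/
noncomputable def jlGrundy (m : ℕ) (S : Finset (Fin m)) : ℕ :=
  mex (S.attach.image (fun v =>
    jlGrundy m (S.filter (fun u => 2 < (cycleGraph m).dist v.1 u))))
termination_by S.card
decreasing_by
  apply Finset.card_lt_card
  rw [Finset.ssubset_iff_of_subset (Finset.filter_subset _ _)]
  exact ⟨v.1, v.2, by simp [SimpleGraph.dist_self]⟩

end Toggle

namespace S13aux
open Toggle Finset
open Fin.CommRing

variable {m : ℕ} [NeZero m]

/-- The union of closed 1-balls around the elements of `T` in the cycle `ℤ/m`. -/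
def ballF (T : Finset (Fin m)) : Finset (Fin m) := T.biUnion (fun a => {a - 1, a, a + 1})

/-- The canonical reachable position: row `r` carries 1 off `ballF T`, the other
row carries 1 exactly on `T`. -/
def posF (r : Fin 2) (T : Finset (Fin m)) : Fin 2 × Fin m → Bool :=
  fun p => if p.1 = r then decide (p.2 ∉ ballF T) else decide (p.2 ∈ T)

/-- Elements of `T` are pairwise at cyclic distance at least 3. -/
def Sep (T : Finset (Fin m)) : Prop :=
  ∀ a ∈ T, ∀ b ∈ T, a ≠ b → b ≠ a - 2 ∧ b ≠ a - 1 ∧ b ≠ a + 1 ∧ b ≠ a + 2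

/-- `b` is at cyclic distance at least 3 from every element of `T`. -/
def FreeAt (T : Finset (Fin m)) (b : Fin m) : Prop :=
  ∀ a ∈ T, b ≠ a - 2 ∧ b ≠ a - 1 ∧ b ≠ a ∧ b ≠ a + 1 ∧ b ≠ a + 2

lemma mem_ballF {T : Finset (Fin m)} {j : Fin m} :
    j ∈ ballF T ↔ ∃ a ∈ T, j = a - 1 ∨ j = a ∨ j = a + 1 := by
  simp [ballF]

lemma mem_ballF_insert {T : Finset (Fin m)} {b j : Fin m} :
    j ∈ ballF (insert b T) ↔ (j = b - 1 ∨ j = b ∨ j = b + 1) ∨ j ∈ ballF T := by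
  simp only [ballF, Finset.biUnion_insert, Finset.mem_union, Finset.mem_insert,
    Finset.mem_singleton, Finset.mem_biUnion]

lemma one_ne_zero' (hm : 3 ≤ m) : (1 : Fin m) ≠ 0 := by
  simp only [ne_eq, Fin.ext_iff, Fin.val_one', Fin.val_zero]
  rw [Nat.mod_eq_of_lt (by omega)]; omega

lemma two_ne_zero' (hm : 3 ≤ m) : (2 : Fin m) ≠ 0 := by
  rw [show (2 : Fin m) = 1 + 1 from (one_add_one_eq_two).symm]
  simp only [ne_eq, Fin.ext_iff, Fin.add_def, Fin.val_one', Fin.val_zero]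
  rw [Nat.mod_eq_of_lt (show 1 < m by omega), Nat.mod_eq_of_lt (show 1 + 1 < m by omega)]
  omega

lemma fin2_ne_iff (s r : Fin 2) : s ≠ r ↔ s = r + 1 := by revert s r; decide

lemma fin2_self_ne (r : Fin 2) : r ≠ r + 1 := by revert r; decide

lemma fin2_add_add (r : Fin 2) : r + 1 + 1 = r := by revert r; decide

lemma mod_succ_iff (hm : 3 ≤ m) (i j : Fin m) :
    ((i : ℕ) + 1) % m = (j : ℕ) ↔ j = i + 1 := by
  rw [Fin.ext_iff, Fin.add_def, Fin.val_one', Nat.mod_eq_of_lt (show 1 < m by omega)]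
  exact eq_comm

lemma add_one_ne_sub_one (hm : 3 ≤ m) (b : Fin m) : b + 1 ≠ b - 1 := by
  intro h
  apply two_ne_zero' hm
  have h2 : b + 1 = b + (-1) := by rw [h, sub_eq_add_neg]
  have h3 : (1 : Fin m) = -1 := add_left_cancel h2
  calc (2 : Fin m) = 1 + 1 := (one_add_one_eq_two).symm
    _ = 1 + -1 := by rw [← h3]
    _ = 0 := add_neg_cancel 1

lemma self_ne_add_one (hm : 3 ≤ m) (b : Fin m) : b ≠ b + 1 := by
  intro h; exact one_ne_zero' hm (by simpa using h.symm)

lemma self_ne_sub_one (hm : 3 ≤ m) (b : Fin m) : b ≠ b - 1 := by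
  intro h; exact one_ne_zero' hm (by
    have := sub_eq_self.mp h.symm
    exact this)

lemma petersen_adj (hm : 3 ≤ m) (s t : Fin 2) (i j : Fin m) :
    (petersen m 1).Adj (s, i) (t, j) ↔
      (s = t ∧ (j = i + 1 ∨ i = j + 1)) ∨ (s ≠ t ∧ i = j) := by
  rw [petersen, SimpleGraph.fromRel_adj]
  simp only [mod_succ_iff hm, ne_eq, Prod.mk.injEq, not_and]
  have h1 : ∀ x : Fin m, x ≠ x + 1 := self_ne_add_one hm
  fin_cases s <;> fin_cases t <;> simp <;>
    first
      | exact eq_comm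
      | (rintro (h2 | h2) rfl <;> exact h1 _ h2)

lemma mem_nbhd (hm : 3 ≤ m) (r : Fin 2) (b : Fin m) (p : Fin 2 × Fin m) :
    p ∈ closedNbhd (petersen m 1) (r, b) ↔
      p = (r, b) ∨ p = (r, b + 1) ∨ p = (r, b - 1) ∨ p = (r + 1, b) := by
  obtain ⟨s, j⟩ := p
  rw [closedNbhd, Finset.mem_insert, SimpleGraph.mem_neighborFinset, petersen_adj hm]
  have e1 : ∀ x : Fin m, b = x + 1 ↔ x = b - 1 := fun x => by
    rw [eq_sub_iff_add_eq]; exact eq_comm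
  have e2 : (r ≠ s) ↔ (s = r + 1) := by revert r s; decide
  have e3 : (r = s) ↔ (s = r) := eq_comm
  have e4 : (b = j) ↔ (j = b) := eq_comm
  simp only [Prod.mk.injEq, e1, e2, e3, e4]
  tauto

lemma nbhd_eq (hm : 3 ≤ m) (r : Fin 2) (b : Fin m) :
    closedNbhd (petersen m 1) (r, b) =
      {(r, b), (r, b + 1), (r, b - 1), (r + 1, b)} := by
  ext p
  rw [mem_nbhd hm]
  simp

lemma nbhd_card (hm : 3 ≤ m) (r : Fin 2) (b : Fin m) :
    (closedNbhd (petersen m 1) (r, b)).card = 4 := by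
  have h1 : ((r, b) : Fin 2 × Fin m) ∉ ({(r, b + 1), (r, b - 1), (r + 1, b)} : Finset _) := by
    simp [Prod.ext_iff, fin2_self_ne r, self_ne_add_one hm b, self_ne_sub_one hm b]
  have h2 : ((r, b + 1) : Fin 2 × Fin m) ∉ ({(r, b - 1), (r + 1, b)} : Finset _) := by
    simp [Prod.ext_iff, fin2_self_ne r, add_one_ne_sub_one hm b]
  have h3 : ((r, b - 1) : Fin 2 × Fin m) ∉ ({(r + 1, b)} : Finset _) := by
    simp [Prod.ext_iff, fin2_self_ne r]
  rw [nbhd_eq hm, card_insert_of_notMem h1, card_insert_of_notMem h2,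
    card_insert_of_notMem h3, card_singleton]

lemma nbhdWeight_eq (hm : 3 ≤ m) (ω : Fin 2 × Fin m → Bool) (r : Fin 2) (b : Fin m) :
    nbhdWeight (petersen m 1) ω (r, b) =
      (if ω (r, b) = true then 1 else 0) + (if ω (r, b + 1) = true then 1 else 0)
        + (if ω (r, b - 1) = true then 1 else 0) + (if ω (r + 1, b) = true then 1 else 0) := by
  have h1 : ((r, b) : Fin 2 × Fin m) ∉ ({(r, b + 1), (r, b - 1), (r + 1, b)} : Finset _) := by
    simp [Prod.ext_iff, fin2_self_ne r, self_ne_add_one hm b, self_ne_sub_one hm b]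
  have h2 : ((r, b + 1) : Fin 2 × Fin m) ∉ ({(r, b - 1), (r + 1, b)} : Finset _) := by
    simp [Prod.ext_iff, fin2_self_ne r, add_one_ne_sub_one hm b]
  have h3 : ((r, b - 1) : Fin 2 × Fin m) ∉ ({(r + 1, b)} : Finset _) := by
    simp [Prod.ext_iff, fin2_self_ne r]
  rw [nbhdWeight, nbhd_eq hm, Finset.card_filter, Finset.sum_insert h1,
    Finset.sum_insert h2, Finset.sum_insert h3, Finset.sum_singleton]
  ring

lemma isLegal_iff (hm : 3 ≤ m) (ω : Fin 2 × Fin m → Bool) (r : Fin 2) (b : Fin m) :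
    IsLegal (petersen m 1) ω (r, b) ↔
      ω (r, b) = true ∧ 3 ≤ nbhdWeight (petersen m 1) ω (r, b) := by
  have hle : nbhdWeight (petersen m 1) ω (r, b) ≤ 4 :=
    le_trans (Finset.card_filter_le _ _) (le_of_eq (nbhd_card hm r b))
  have hmv : nbhdWeight (petersen m 1) (move (petersen m 1) ω (r, b)) (r, b)
      = 4 - nbhdWeight (petersen m 1) ω (r, b) := by
    unfold nbhdWeight
    have h : (closedNbhd (petersen m 1) (r, b)).filter
          (fun u => move (petersen m 1) ω (r, b) u = true)
        = closedNbhd (petersen m 1) (r, b)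
            \ (closedNbhd (petersen m 1) (r, b)).filter (fun u => ω u = true) := by
      ext u
      simp only [Finset.mem_filter, Finset.mem_sdiff, move]
      by_cases hu : u ∈ closedNbhd (petersen m 1) (r, b) <;> simp [hu]
    rw [h, Finset.card_sdiff_of_subset (Finset.filter_subset _ _), ← nbhdWeight, nbhd_card hm]
  rw [IsLegal, hmv]
  constructor
  · rintro ⟨h1, h2⟩; exact ⟨h1, by omega⟩
  · rintro ⟨h1, h2⟩; exact ⟨h1, by omega⟩

lemma freeAt_not_ball {T : Finset (Fin m)} {b : Fin m} (hfree : FreeAt T b) :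
    b ∉ ballF T ∧ b + 1 ∉ ballF T ∧ b - 1 ∉ ballF T := by
  refine ⟨?_, ?_, ?_⟩ <;> rw [mem_ballF] <;> rintro ⟨a, ha, (h | h | h)⟩ <;>
    obtain ⟨q1, q2, q3, q4, q5⟩ := hfree a ha
  · exact q2 h
  · exact q3 h
  · exact q4 h
  · exact q1 (by linear_combination h)
  · exact q2 (by linear_combination h)
  · exact q3 (by linear_combination h)
  · exact q3 (by linear_combination h)
  · exact q4 (by linear_combination h)
  · exact q5 (by linear_combination h)

lemma not_ball_freeAt {T : Finset (Fin m)} {b : Fin m} (h0 : b ∉ ballF T)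
    (h1 : b + 1 ∉ ballF T) (h2 : b - 1 ∉ ballF T) : FreeAt T b := by
  intro a ha
  refine ⟨fun h => h1 (mem_ballF.mpr ⟨a, ha, Or.inl (by linear_combination h)⟩),
    fun h => h0 (mem_ballF.mpr ⟨a, ha, Or.inl h⟩),
    fun h => h0 (mem_ballF.mpr ⟨a, ha, Or.inr (Or.inl h)⟩),
    fun h => h0 (mem_ballF.mpr ⟨a, ha, Or.inr (Or.inr h)⟩),
    fun h => h2 (mem_ballF.mpr ⟨a, ha, Or.inr (Or.inr (by linear_combination h))⟩)⟩

lemma legal_posF (hm : 3 ≤ m) {T : Finset (Fin m)} (hsep : Sep T) (r s : Fin 2)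
    (i : Fin m) :
    IsLegal (petersen m 1) (posF r T) (s, i) ↔ s = r ∧ FreeAt T i := by
  have hr1 : r + 1 ≠ r := (fin2_self_ne r).symm
  have hcase : s = r ∨ s = r + 1 := by revert s r; decide
  rcases hcase with h | h <;> rw [h]
  · have v1 : posF r T (r, i) = true ↔ i ∉ ballF T := by simp [posF]
    have v2 : posF r T (r, i + 1) = true ↔ i + 1 ∉ ballF T := by simp [posF]
    have v3 : posF r T (r, i - 1) = true ↔ i - 1 ∉ ballF T := by simp [posF]
    have v4 : posF r T (r + 1, i) = true ↔ i ∈ T := by simp [posF, hr1]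
    rw [isLegal_iff hm, nbhdWeight_eq hm]
    constructor
    · rintro ⟨h1, h2⟩
      have e4 : posF r T (r + 1, i) ≠ true := fun h =>
        (v1.mp h1) (mem_ballF.mpr ⟨i, v4.mp h, Or.inr (Or.inl rfl)⟩)
      refine ⟨rfl, not_ball_freeAt (v1.mp h1) ?_ ?_⟩
      · intro hmem
        have e2 : posF r T (r, i + 1) ≠ true := fun h => (v2.mp h) hmem
        rw [if_pos h1, if_neg e2, if_neg e4] at h2
        split_ifs at h2 <;> omega
      · intro hmem
        have e3 : posF r T (r, i - 1) ≠ true := fun h => (v3.mp h) hmem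
        rw [if_pos h1, if_neg e3, if_neg e4] at h2
        split_ifs at h2 <;> omega
    · rintro ⟨-, hfree⟩
      obtain ⟨n0, n1, n2⟩ := freeAt_not_ball hfree
      refine ⟨v1.mpr n0, ?_⟩
      rw [if_pos (v1.mpr n0), if_pos (v2.mpr n1), if_pos (v3.mpr n2)]
      omega
  · rw [isLegal_iff hm, nbhdWeight_eq hm]
    constructor
    · rintro ⟨h1, h2⟩
      exfalso
      have hiT : i ∈ T := by simpa [posF, hr1] using h1
      have e2 : posF r T (r + 1, i + 1) ≠ true := fun h => by
        have h' : i + 1 ∈ T := by simpa [posF, hr1] using h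
        exact (hsep i hiT (i + 1) h' (self_ne_add_one hm i)).2.2.1 rfl
      have e3 : posF r T (r + 1, i - 1) ≠ true := fun h => by
        have h' : i - 1 ∈ T := by simpa [posF, hr1] using h
        exact (hsep i hiT (i - 1) h' (self_ne_sub_one hm i)).2.1 rfl
      have e4 : posF r T (r + 1 + 1, i) ≠ true := by
        rw [fin2_add_add]
        intro h
        exact (by simpa [posF] using h : i ∉ ballF T)
          (mem_ballF.mpr ⟨i, hiT, Or.inr (Or.inl rfl)⟩)
      rw [if_pos h1, if_neg e2, if_neg e3, if_neg e4] at h2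
      omega
    · rintro ⟨habs, -⟩
      exact absurd habs hr1

lemma move_posF (hm : 3 ≤ m) {T : Finset (Fin m)} {b : Fin m} (hfree : FreeAt T b)
    (r : Fin 2) :
    move (petersen m 1) (posF r T) (r, b) = posF r (insert b T) := by
  have hr1 : r + 1 ≠ r := (fin2_self_ne r).symm
  obtain ⟨nb0, nb1, nb2⟩ := freeAt_not_ball hfree
  funext p
  obtain ⟨s, j⟩ := p
  simp only [move]
  by_cases hp : (s, j) ∈ closedNbhd (petersen m 1) (r, b)
  · rw [if_pos hp]
    rcases (mem_nbhd hm r b (s, j)).mp hp with h | h | h | h <;> rw [h]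
    · have hmem : b ∈ ballF (insert b T) :=
        mem_ballF.mpr ⟨b, Finset.mem_insert_self b T, Or.inr (Or.inl rfl)⟩
      simp [posF, nb0, hmem]
    · have hmem : b + 1 ∈ ballF (insert b T) :=
        mem_ballF.mpr ⟨b, Finset.mem_insert_self b T, Or.inr (Or.inr rfl)⟩
      simp [posF, nb1, hmem]
    · have hmem : b - 1 ∈ ballF (insert b T) :=
        mem_ballF.mpr ⟨b, Finset.mem_insert_self b T, Or.inl rfl⟩
      simp [posF, nb2, hmem]
    · have hbT : b ∉ T := fun h => nb0 (mem_ballF.mpr ⟨b, h, Or.inr (Or.inl rfl)⟩)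
      simp [posF, hr1, hbT]
  · rw [if_neg hp]
    rw [mem_nbhd hm] at hp
    push_neg at hp
    obtain ⟨p1, p2, p3, p4⟩ := hp
    by_cases hs : s = r
    · rw [hs] at p1 p2 p3 ⊢
      have hj1 : j ≠ b := fun h => p1 (by rw [h])
      have hj2 : j ≠ b + 1 := fun h => p2 (by rw [h])
      have hj3 : j ≠ b - 1 := fun h => p3 (by rw [h])
      simp only [posF]
      rw [if_pos trivial, if_pos trivial, decide_eq_decide]
      rw [not_iff_not, mem_ballF_insert]
      tauto
    · have hs' : s = r + 1 := (fin2_ne_iff s r).mp hs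
      rw [hs'] at p4 ⊢
      have hjb : j ≠ b := fun h => p4 (by rw [h])
      simp only [posF, if_neg hr1]
      rw [decide_eq_decide]
      simp [Finset.mem_insert, hjb]

lemma sep_insert {T : Finset (Fin m)} {b : Fin m} (hsep : Sep T) (hfree : FreeAt T b) :
    Sep (insert b T) := by
  intro a ha c hc hne
  rw [Finset.mem_insert] at ha hc
  rcases ha with rfl | ha <;> rcases hc with rfl | hc
  · exact absurd rfl hne
  · obtain ⟨q1, q2, q3, q4, q5⟩ := hfree c hc
    exact ⟨fun h => q5 (by linear_combination -h), fun h => q4 (by linear_combination -h),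
      fun h => q2 (by linear_combination -h), fun h => q1 (by linear_combination -h)⟩
  · obtain ⟨q1, q2, q3, q4, q5⟩ := hfree a ha
    exact ⟨q1, q2, q4, q5⟩
  · exact hsep a ha c hc hne

lemma freeAt_mono {T : Finset (Fin m)} {b x : Fin m} (h : FreeAt (insert b T) x) :
    FreeAt T x := fun a ha => h a (mem_insert_of_mem ha)

lemma posF_zero_empty (hm : 3 ≤ m) : posF (0 : Fin 2) (∅ : Finset (Fin m)) = P01 m := by
  funext p
  by_cases h : p.1 = 0 <;> simp [posF, ballF, P01, h]

lemma posF_one_empty (hm : 3 ≤ m) : posF (1 : Fin 2) (∅ : Finset (Fin m)) = P10 m := by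
  funext p
  by_cases h : p.1 = 1 <;> simp [posF, ballF, P10, h]

end S13aux
/-- in a game of Toggle on `P(m,1)` (`m ≥ 3`) starting from
`P_{0,1}(m,1)` or from `P_{1,0}(m,1)`, every vertex that is unplayable at some
reachable position is terminally unplayable at that position. -/
theorem statement13 (m : ℕ) (hm : 3 ≤ m) (ω₀ : Fin 2 × Fin m → Bool)
    (h0 : ω₀ = Toggle.P01 m ∨ ω₀ = Toggle.P10 m)
    (ω : Fin 2 × Fin m → Bool) (hr : Toggle.Reach (Toggle.petersen m 1) ω₀ ω)
    (v : Fin 2 × Fin m) (hv : ¬ Toggle.IsLegal (Toggle.petersen m 1) ω v) :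
    Toggle.TerminallyUnplayable (Toggle.petersen m 1) ω v := by
  haveI : NeZero m := ⟨by omega⟩
  have propag : ∀ ωa ωb : Fin 2 × Fin m → Bool,
      Relation.ReflTransGen (Toggle.Step (Toggle.petersen m 1)) ωa ωb →
      (∃ r T, S13aux.Sep T ∧ ωa = S13aux.posF r T) →
      (∃ r T, S13aux.Sep T ∧ ωb = S13aux.posF r T) ∧
        (∀ u, ¬ Toggle.IsLegal (Toggle.petersen m 1) ωa u →
          ¬ Toggle.IsLegal (Toggle.petersen m 1) ωb u) := by
    intro ωa ωb h
    induction h with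
    | refl => exact fun hI => ⟨hI, fun u h => h⟩
    | tail hre hstep ih =>
      intro hI
      obtain ⟨hI', hmono⟩ := ih hI
      obtain ⟨r, T, hsep, rfl⟩ := hI'
      obtain ⟨u, hleg, rfl⟩ := hstep
      obtain ⟨s, i⟩ := u
      rw [S13aux.legal_posF hm hsep] at hleg
      obtain ⟨hs, hfree⟩ := hleg
      rw [hs, S13aux.move_posF hm hfree r]
      have hsep' := S13aux.sep_insert hsep hfree
      refine ⟨⟨r, insert i T, hsep', rfl⟩, ?_⟩
      intro w hw
      have h1 := hmono w hw
      obtain ⟨ws, wi⟩ := w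
      rw [S13aux.legal_posF hm hsep']
      rintro ⟨hwr, hwfree⟩
      exact h1 ((S13aux.legal_posF hm hsep r ws wi).mpr ⟨hwr, S13aux.freeAt_mono hwfree⟩)
  have inv0 : ∃ r T, S13aux.Sep T ∧ ω₀ = S13aux.posF r T := by
    rcases h0 with rfl | rfl
    · exact ⟨0, ∅, fun a ha => absurd ha (Finset.notMem_empty a),
        (S13aux.posF_zero_empty hm).symm⟩
    · exact ⟨1, ∅, fun a ha => absurd ha (Finset.notMem_empty a),
        (S13aux.posF_one_empty hm).symm⟩
  obtain ⟨invω, -⟩ := propag ω₀ ω hr inv0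
  intro ω' hreach
  exact (propag ω ω' hreach invω).2 v hv
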